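/- Generating function for the bicomplex Hermite polynomials (bar version): for all U, V, Z ∈ ℂ × ℂ, with Z̄ := (conj λ₂, conj λ₁) for Z = (λ₁, λ₂), the double series Σ_{m=0}^∞ Σ_{n=0}^∞ 𝐇_{m,n}(Z, Z̄) · U^m · V^n / (m! n!) converges in the Banach algebra ℂ × ℂ and equals exp(U·Z + V·Z̄ − U·V). -/

import Mathlib

open Complex

/-- The bicomplex Hermite polynomial of the first kind `𝐇_{m,n}(Z,W)`, computed in the
bicomplex algebra `ℂ × ℂ` (idempotent representation, componentwise operations). -/
noncomputable def hermiteBC (m n : ℕ) (Z W : ℂ × ℂ) : ℂ × ℂ :=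
  ∑ k ∈ Finset.range (min m n + 1),
    ((-1 : ℂ) ^ k * (k.factorial : ℂ) * (m.choose k : ℂ) * (n.choose k : ℂ)) •
      (Z ^ (m - k) * W ^ (n - k))

/-- The bicomplex exponential: the componentwise complex exponential on `ℂ × ℂ`. -/
noncomputable def bcExp (Z : ℂ × ℂ) : ℂ × ℂ := (Complex.exp Z.1, Complex.exp Z.2)

/-- The bicomplex bar-conjugate: `Z̄ = (conj λ₂, conj λ₁)` for `Z = (λ₁, λ₂)`. -/
def bcBar (Z : ℂ × ℂ) : ℂ × ℂ := (starRingEnd ℂ Z.2, starRingEnd ℂ Z.1)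

/-- Scalar version of the Hermite polynomial. -/
noncomputable def hermiteC (m n : ℕ) (z w : ℂ) : ℂ :=
  ∑ k ∈ Finset.range (min m n + 1),
    ((-1 : ℂ) ^ k * (k.factorial : ℂ) * (m.choose k : ℂ) * (n.choose k : ℂ)) *
      (z ^ (m - k) * w ^ (n - k))

lemma hermiteBC_fst (m n : ℕ) (Z W : ℂ × ℂ) :
    (hermiteBC m n Z W).1 = hermiteC m n Z.1 W.1 := by
  simp [hermiteBC, hermiteC, Prod.fst_sum]

lemma hermiteBC_snd (m n : ℕ) (Z W : ℂ × ℂ) :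
    (hermiteBC m n Z W).2 = hermiteC m n Z.2 W.2 := by
  simp [hermiteBC, hermiteC, Prod.snd_sum]

noncomputable def T (u v z w : ℂ) (q : (ℕ × ℕ) × ℕ) : ℂ :=
  if q.2 ≤ q.1.1 ∧ q.2 ≤ q.1.2 then
    (-1 : ℂ) ^ q.2 * u ^ q.1.1 * v ^ q.1.2 * z ^ (q.1.1 - q.2) * w ^ (q.1.2 - q.2) /
      ((q.2.factorial : ℂ) * ((q.1.1 - q.2).factorial : ℂ) * ((q.1.2 - q.2).factorial : ℂ))
  else 0

lemma expSeriesHasSum (x : ℂ) :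
    HasSum (fun n : ℕ => x ^ n / (n.factorial : ℂ)) (Complex.exp x) := by
  rw [Complex.exp_eq_exp_ℂ]
  exact NormedSpace.expSeries_div_hasSum_exp x

lemma expSeriesNormSummable (x : ℂ) :
    Summable (fun n : ℕ => ‖x ^ n / (n.factorial : ℂ)‖) := by
  simpa [norm_div, norm_pow] using Real.summable_pow_div_factorial ‖x‖


lemma hasSum_mul_complex {ι κ : Type*} {f : ι → ℂ} {g : κ → ℂ} {s t : ℂ}
    (hf : HasSum f s) (hg : HasSum g t)
    (hfn : Summable fun i => ‖f i‖) (hgn : Summable fun i => ‖g i‖) :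
    HasSum (fun x : ι × κ => f x.1 * g x.2) (s * t) :=
  hf.mul hg (summable_mul_of_summable_norm hfn hgn)

lemma summable_norm_mul_complex {ι κ : Type*} {f : ι → ℂ} {g : κ → ℂ}
    (hfn : Summable fun i => ‖f i‖) (hgn : Summable fun i => ‖g i‖) :
    Summable fun x : ι × κ => ‖f x.1 * g x.2‖ :=
  Summable.mul_norm hfn hgn

set_option maxHeartbeats 1000000 in
lemma hasSum_T (u v z w : ℂ) :
    HasSum (T u v z w) (Complex.exp (u * z + v * w - u * v)) := by
  have h1 := expSeriesHasSum (u * z)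
  have h2 := expSeriesHasSum (v * w)
  have h3 := expSeriesHasSum (-(u * v))
  have h12' := hasSum_mul_complex h1 h2 (expSeriesNormSummable _) (expSeriesNormSummable _)
  have h12 : HasSum (fun p : ℕ × ℕ =>
      (u * z) ^ p.1 / (p.1.factorial : ℂ) * ((v * w) ^ p.2 / (p.2.factorial : ℂ)))
      (Complex.exp (u * z) * Complex.exp (v * w)) := h12'
  have h12norm' := summable_norm_mul_complex (f := fun a : ℕ => (u * z) ^ a / (a.factorial : ℂ))
      (g := fun b : ℕ => (v * w) ^ b / (b.factorial : ℂ))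
      (expSeriesNormSummable _) (expSeriesNormSummable _)
  have h12norm : Summable (fun p : ℕ × ℕ =>
      ‖(u * z) ^ p.1 / (p.1.factorial : ℂ) * ((v * w) ^ p.2 / (p.2.factorial : ℂ))‖) := h12norm'
  have h123' := hasSum_mul_complex h12 h3 h12norm (expSeriesNormSummable _)
  have h123 : HasSum (fun q : (ℕ × ℕ) × ℕ =>
      (u * z) ^ q.1.1 / (q.1.1.factorial : ℂ) * ((v * w) ^ q.1.2 / (q.1.2.factorial : ℂ)) *
        ((-(u * v)) ^ q.2 / (q.2.factorial : ℂ)))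
      (Complex.exp (u * z) * Complex.exp (v * w) * Complex.exp (-(u * v))) := h123'
  -- reindex via the injection ((a,b),c) ↦ ((a+c, b+c), c)
  have hexp : Complex.exp (u * z) * Complex.exp (v * w) * Complex.exp (-(u * v)) =
      Complex.exp (u * z + v * w - u * v) := by
    rw [← Complex.exp_add, ← Complex.exp_add]; ring_nf
  rw [hexp] at h123
  set ι : (ℕ × ℕ) × ℕ → (ℕ × ℕ) × ℕ := fun q => ((q.1.1 + q.2, q.1.2 + q.2), q.2) with hι
  have hinj : Function.Injective ι := by
    rintro ⟨⟨a, b⟩, c⟩ ⟨⟨a', b'⟩, c'⟩ h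
    rw [hι] at h
    simp only [Prod.mk.injEq] at h
    obtain ⟨⟨h1, h2⟩, h3⟩ := h
    subst h3
    have ha : a = a' := by omega
    have hb : b = b' := by omega
    subst ha; subst hb; rfl
  have hzero : ∀ x ∉ Set.range ι, T u v z w x = 0 := by
    rintro ⟨⟨m, n⟩, k⟩ hx
    rw [T, if_neg]
    rintro ⟨hkm, hkn⟩
    exact hx ⟨((m - k, n - k), k), by simp [ι, Nat.sub_add_cancel hkm, Nat.sub_add_cancel hkn]⟩
  rw [← hinj.hasSum_iff hzero]
  have hcomp : (T u v z w) ∘ ι = fun q : (ℕ × ℕ) × ℕ =>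
      (u * z) ^ q.1.1 / (q.1.1.factorial : ℂ) * ((v * w) ^ q.1.2 / (q.1.2.factorial : ℂ)) *
        ((-(u * v)) ^ q.2 / (q.2.factorial : ℂ)) := by
    funext q
    obtain ⟨⟨a, b⟩, c⟩ := q
    show T u v z w ((a + c, b + c), c) = _
    rw [T, if_pos ⟨Nat.le_add_left _ _, Nat.le_add_left _ _⟩]
    dsimp only
    rw [Nat.add_sub_cancel, Nat.add_sub_cancel, mul_pow, mul_pow, neg_pow (u * v), mul_pow,
      pow_add, pow_add]
    ring
  rw [hcomp]
  exact h123

lemma fiber_sum (u v z w : ℂ) (p : ℕ × ℕ) :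
    HasSum (fun k => T u v z w (p, k))
      (((p.1.factorial : ℂ) * (p.2.factorial : ℂ))⁻¹ *
        (hermiteC p.1 p.2 z w * u ^ p.1 * v ^ p.2)) := by
  obtain ⟨m, n⟩ := p
  have h0 : ∀ k ∉ Finset.range (min m n + 1), T u v z w ((m, n), k) = 0 := by
    intro k hk
    rw [T, if_neg]
    rintro ⟨hkm, hkn⟩
    exact hk (Finset.mem_range.2 (Nat.lt_succ_of_le (le_min hkm hkn)))
  have := hasSum_sum_of_ne_finset_zero (L := SummationFilter.unconditional ℕ) h0
  convert this using 1
  dsimp only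
  rw [hermiteC, Finset.sum_mul, Finset.sum_mul, Finset.mul_sum]
  refine Finset.sum_congr rfl fun k hk => ?_
  have hk' := Finset.mem_range.1 hk
  have hkm : k ≤ m := le_trans (Nat.lt_succ_iff.1 hk') (min_le_left _ _)
  have hkn : k ≤ n := le_trans (Nat.lt_succ_iff.1 hk') (min_le_right _ _)
  rw [T, if_pos ⟨hkm, hkn⟩]
  rw [Nat.cast_choose ℂ hkm, Nat.cast_choose ℂ hkn]
  have hm : (m.factorial : ℂ) ≠ 0 := Nat.cast_ne_zero.2 m.factorial_ne_zero
  have hn : (n.factorial : ℂ) ≠ 0 := Nat.cast_ne_zero.2 n.factorial_ne_zero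
  have hkf : (k.factorial : ℂ) ≠ 0 := Nat.cast_ne_zero.2 k.factorial_ne_zero
  have hmk : ((m - k).factorial : ℂ) ≠ 0 := Nat.cast_ne_zero.2 (m - k).factorial_ne_zero
  have hnk : ((n - k).factorial : ℂ) ≠ 0 := Nat.cast_ne_zero.2 (n - k).factorial_ne_zero
  field_simp

lemma key (u v z w : ℂ) :
    HasSum (fun p : ℕ × ℕ =>
        ((p.1.factorial : ℂ) * (p.2.factorial : ℂ))⁻¹ *
          (hermiteC p.1 p.2 z w * u ^ p.1 * v ^ p.2))
      (Complex.exp (u * z + v * w - u * v)) :=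
  (hasSum_T u v z w).prod_fiberwise (fiber_sum u v z w)

/-- **Generating function for the bicomplex Hermite polynomials (bar version):**
`∑_{m,n} 𝐇_{m,n}(Z,Z̄) U^m V^n/(m! n!) = exp(UZ + VZ̄ - UV)`. -/
theorem hermiteBC_generating_bar (U V Z : ℂ × ℂ) :
    HasSum
      (fun p : ℕ × ℕ =>
        ((p.1.factorial : ℂ) * (p.2.factorial : ℂ))⁻¹ •
          (hermiteBC p.1 p.2 Z (bcBar Z) * U ^ p.1 * V ^ p.2))
      (bcExp (U * Z + V * bcBar Z - U * V)) := by
  have h1 := key U.1 V.1 Z.1 (bcBar Z).1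
  have h2 := key U.2 V.2 Z.2 (bcBar Z).2
  have := h1.prodMk h2
  convert this using 1
  funext p
  apply Prod.ext
  · simp [Prod.smul_fst, Prod.fst_mul, Prod.pow_fst, hermiteBC_fst, smul_eq_mul]
  · simp [Prod.smul_snd, Prod.snd_mul, Prod.pow_snd, hermiteBC_snd, smul_eq_mul]
  · rfl
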